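/- arXiv:1012.5856 — 3 statements merged into one kernel-verified Lean document; each statement's English description precedes it below -/
import Mathlib

section
/- Let q ≥ 1 and let f : ℝ^{1+q} → [0,∞] be measurable. Writing u(v) = (1, v₁, …, v_q) ∈ ℝ^{1+q} for v ∈ ℝ^q, one has ∫_{ℝ^{1+q}} f(y) dy = ∫_{ℝ^q} ∫_{ℝ} f(e · u(v)) |e|^q de dv, where all integrals are with respect to Lebesgue measure. (This is the case K = 1, β = 1 of the paper's Jacobian Lemma 3 for the affine-shape decomposition Y = U E.) -/
open MeasureTheory
open scoped ENNReal

/-- The case `K = 1`, `β = 1` of the affine-shape Jacobian lemma: for nonnegative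
measurable `f` on `ℝ^{1+q}`, writing `u(v) = (1, v₁, …, v_q)`,
`∫_{ℝ^{1+q}} f(y) dy = ∫_{ℝ^q} ∫_ℝ f(e · u(v)) |e|^q de dv`. -/
theorem affine_jacobian_real_K_one (q : ℕ) (hq : 1 ≤ q)
    (f : (Fin (q + 1) → ℝ) → ℝ≥0∞) (hf : Measurable f) :
    ∫⁻ y : Fin (q + 1) → ℝ, f y
      = ∫⁻ v : Fin q → ℝ, ∫⁻ e : ℝ,
          f (e • (Fin.cons 1 v : Fin (q + 1) → ℝ)) * ENNReal.ofReal (|e| ^ q) := by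
  -- split off coordinate 0
  have hmp := (volume_preserving_piFinSuccAbove (fun _ : Fin (q + 1) => ℝ) 0).symm
  have h0 : ∫⁻ y : Fin (q + 1) → ℝ, f y
      = ∫⁻ p : ℝ × (Fin q → ℝ), f (Fin.cons p.1 p.2) := by
    rw [← hmp.lintegral_comp hf]
    congr 1
    ext p
    congr 1
    show ((MeasurableEquiv.piFinSuccAbove (fun _ : Fin (q + 1) => ℝ) 0).symm p) = _
    simp [MeasurableEquiv.piFinSuccAbove, Fin.insertNth_zero', Fin.consEquiv]
  rw [h0]
  have hcons : Measurable fun p : ℝ × (Fin q → ℝ) => f (Fin.cons p.1 p.2) := by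
    apply hf.comp
    exact measurable_pi_iff.2 fun i => by
      refine Fin.cases ?_ (fun j => ?_) i
      · exact measurable_fst
      · simpa [Function.comp_def] using (measurable_pi_apply j).comp measurable_snd
  rw [MeasureTheory.Measure.volume_eq_prod, lintegral_prod _ hcons.aemeasurable]
  have hsmul : Measurable fun p : ℝ × (Fin q → ℝ) =>
      p.1 • (Fin.cons 1 p.2 : Fin (q + 1) → ℝ) := by
    refine measurable_pi_iff.2 fun i => ?_
    refine Fin.cases ?_ (fun j => ?_) i
    · simp only [Pi.smul_apply, Fin.cons_zero, smul_eq_mul, mul_one]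
      exact measurable_fst
    · simp only [Pi.smul_apply, Fin.cons_succ, smul_eq_mul]
      exact measurable_fst.mul ((measurable_pi_apply j).comp measurable_snd)
  have hG : Measurable fun p : ℝ × (Fin q → ℝ) =>
      f (p.1 • (Fin.cons 1 p.2 : Fin (q + 1) → ℝ)) * ENNReal.ofReal (|p.1| ^ q) :=
    (hf.comp hsmul).mul
      (ENNReal.measurable_ofReal.comp ((measurable_fst.abs.pow_const q)))
  -- pointwise in e ≠ 0: substitute w = e • v
  have key : ∀ e : ℝ, e ≠ 0 →
      ∫⁻ w : Fin q → ℝ, f (Fin.cons e w)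
        = ∫⁻ v : Fin q → ℝ,
            f (e • (Fin.cons 1 v : Fin (q + 1) → ℝ)) * ENNReal.ofReal (|e| ^ q) := by
    intro e he
    have hmap := Measure.map_addHaar_smul (E := Fin q → ℝ) volume he
    rw [Module.finrank_fin_fun ℝ] at hmap
    have hg : Measurable fun w : Fin q → ℝ => f (Fin.cons e w) :=
      hcons.comp (measurable_prodMk_left (m := inferInstance))
    have h1 : ∫⁻ v : Fin q → ℝ, f (Fin.cons e (e • v))
        = ENNReal.ofReal ((|e| ^ q)⁻¹) * ∫⁻ w, f (Fin.cons e w) := by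
      rw [← smul_eq_mul (ENNReal.ofReal _), ← lintegral_smul_measure]
      have habs : |(e ^ q)⁻¹| = (|e| ^ q)⁻¹ := by rw [abs_inv, abs_pow]
      rw [← habs, ← hmap, lintegral_map hg (measurable_const_smul e)]
    have hsame : ∀ v : Fin q → ℝ,
        Fin.cons e (e • v) = e • (Fin.cons 1 v : Fin (q + 1) → ℝ) := by
      intro v
      ext i
      refine Fin.cases ?_ (fun j => ?_) i <;> simp
    have hpos : 0 < |e| ^ q := pow_pos (abs_pos.2 he) q
    have hc : ENNReal.ofReal ((|e| ^ q)⁻¹) = (ENNReal.ofReal (|e| ^ q))⁻¹ :=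
      ENNReal.ofReal_inv_of_pos hpos
    have hne0 : ENNReal.ofReal (|e| ^ q) ≠ 0 := by
      simp [ENNReal.ofReal_eq_zero, not_le, hpos, he]
    have hgv : Measurable fun v : Fin q → ℝ =>
        f (e • (Fin.cons 1 v : Fin (q + 1) → ℝ)) :=
      (hf.comp hsmul).comp (measurable_prodMk_left (m := inferInstance))
    calc ∫⁻ w, f (Fin.cons e w)
        = ENNReal.ofReal (|e| ^ q) *
            ((ENNReal.ofReal (|e| ^ q))⁻¹ * ∫⁻ w, f (Fin.cons e w)) := by
          rw [← mul_assoc, ENNReal.mul_inv_cancel hne0 ENNReal.ofReal_ne_top, one_mul]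
      _ = ENNReal.ofReal (|e| ^ q) *
            ∫⁻ v, f (e • (Fin.cons 1 v : Fin (q + 1) → ℝ)) := by
          rw [← hc, ← h1]
          congr 1
          exact lintegral_congr fun v => by rw [hsame v]
      _ = ∫⁻ v, f (e • (Fin.cons 1 v : Fin (q + 1) → ℝ)) * ENNReal.ofReal (|e| ^ q) := by
          rw [lintegral_mul_const _ hgv, mul_comm]
  have hae : ∀ᵐ e : ℝ, e ≠ 0 := by
    rw [ae_iff]
    have : {e : ℝ | ¬ e ≠ 0} = {0} := by ext x; simp
    rw [this]
    exact measure_singleton 0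
  have h2 : ∫⁻ e : ℝ, ∫⁻ w : Fin q → ℝ, f (Fin.cons e w)
      = ∫⁻ e : ℝ, ∫⁻ v : Fin q → ℝ,
          f (e • (Fin.cons 1 v : Fin (q + 1) → ℝ)) * ENNReal.ofReal (|e| ^ q) :=
    lintegral_congr_ae (hae.mono fun e he => key e he)
  rw [h2]
  exact lintegral_lintegral_swap hG.aemeasurable
end

section
/- Let q ≥ 1 and let f : ℂ^{1+q} → [0,∞] be measurable. Writing u(v) = (1, v₁, …, v_q) ∈ ℂ^{1+q} for v ∈ ℂ^q, one has ∫_{ℂ^{1+q}} f(y) dy = ∫_{ℂ^q} ∫_{ℂ} f(e · u(v)) |e|^{2q} de dv, where ℂ^d carries the Lebesgue measure of ℝ^{2d} under the identification ℂ ≅ ℝ². (This is the case K = 1, β = 2 of the paper's Jacobian Lemma 3.) -/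
open MeasureTheory
open scoped ENNReal NNReal

private theorem complex_map_mul (e : ℂ) (he : e ≠ 0) :
    Measure.map (fun z : ℂ => e * z) volume
      = ENNReal.ofReal (Complex.normSq e)⁻¹ • volume := by
  have hdet : LinearMap.det (Algebra.lmul ℝ ℂ e) = Complex.normSq e := by
    rw [← Algebra.norm_apply, Algebra.norm_complex_apply]
  have hne : LinearMap.det (Algebra.lmul ℝ ℂ e) ≠ 0 := by
    rw [hdet]; simpa using he
  have h := Measure.map_linearMap_addHaar_eq_smul_addHaar (volume : Measure ℂ) hne
  rw [hdet, abs_of_nonneg (inv_nonneg.mpr (Complex.normSq_nonneg e))] at h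
  convert h using 2
  · rfl
  · rfl

private theorem pi_smul_const (q : ℕ) (μ : Measure ℂ) [SigmaFinite μ] (c : ℝ≥0) :
    Measure.pi (fun _ : Fin q => (c : ℝ≥0∞) • μ)
      = ((c : ℝ≥0∞) ^ q) • Measure.pi (fun _ => μ) := by
  haveI : SigmaFinite ((c : ℝ≥0∞) • μ) := by rw [← ENNReal.smul_def]; infer_instance
  refine Measure.pi_eq fun s hs => ?_
  simp [Measure.pi_pi, Finset.prod_mul_distrib, Finset.prod_const, mul_comm]

private theorem map_smul_pi (q : ℕ) (e : ℂ) (he : e ≠ 0) :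
    Measure.map (fun w : Fin q → ℂ => e • w) volume
      = ENNReal.ofReal ((Complex.normSq e) ^ q)⁻¹ • volume := by
  set c : ℝ≥0 := ((Complex.normSq e)⁻¹).toNNReal with hc
  have hcoe : (c : ℝ≥0∞) = ENNReal.ofReal (Complex.normSq e)⁻¹ := rfl
  haveI : SigmaFinite ((c : ℝ≥0∞) • (volume : Measure ℂ)) := by
    rw [← ENNReal.smul_def]; infer_instance
  have hmp : ∀ _ : Fin q, MeasurePreserving (fun z : ℂ => e * z) volume
      ((c : ℝ≥0∞) • volume) := fun _ =>
    ⟨(measurable_const_mul e), by rw [hcoe]; exact complex_map_mul e he⟩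
  have h := (measurePreserving_pi (fun _ : Fin q => (volume : Measure ℂ))
    (fun _ => (c : ℝ≥0∞) • volume) hmp).map_eq
  rw [pi_smul_const] at h
  have heq : (fun (a : Fin q → ℂ) (i : Fin q) => e * a i)
      = (fun w : Fin q → ℂ => e • w) := by
    funext w i; simp [Pi.smul_apply, smul_eq_mul]
  rw [heq] at h
  rw [MeasureTheory.volume_pi, h]
  congr 1
  rw [hcoe, ← ENNReal.ofReal_pow (inv_nonneg.mpr (Complex.normSq_nonneg e)), inv_pow]

private theorem lintegral_smul_scale (q : ℕ) (e : ℂ) (he : e ≠ 0)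
    (g : (Fin q → ℂ) → ℝ≥0∞) (hg : Measurable g) :
    ∫⁻ w : Fin q → ℂ, g w
      = ∫⁻ v : Fin q → ℂ, g (e • v) * ENNReal.ofReal (Complex.normSq e ^ q) := by
  have hsm : Measurable (fun w : Fin q → ℂ => e • w) :=
    measurable_pi_iff.mpr fun i => (measurable_pi_apply i).const_smul e
  have hpos : 0 < Complex.normSq e ^ q :=
    pow_pos (Complex.normSq_pos.mpr he) q
  rw [lintegral_mul_const _ (show Measurable fun v : Fin q → ℂ => g (e • v) from hg.comp hsm)]
  have h1 : ∫⁻ v : Fin q → ℂ, g (e • v)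
      = ∫⁻ w, g w ∂(Measure.map (fun w : Fin q → ℂ => e • w) volume) :=
    (lintegral_map hg hsm).symm
  rw [h1, map_smul_pi q e he, lintegral_smul_measure, smul_eq_mul, mul_comm, ← mul_assoc,
    ← ENNReal.ofReal_mul hpos.le, mul_inv_cancel₀ hpos.ne', ENNReal.ofReal_one, one_mul]

/-- The case `K = 1`, `β = 2` of the affine-shape Jacobian lemma: for nonnegative
measurable `f` on `ℂ^{1+q}` (with Lebesgue measure via `ℂ ≅ ℝ²`), writing
`u(v) = (1, v₁, …, v_q)`,
`∫_{ℂ^{1+q}} f(y) dy = ∫_{ℂ^q} ∫_ℂ f(e · u(v)) |e|^{2q} de dv`. -/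
theorem affine_jacobian_complex_K_one (q : ℕ) (hq : 1 ≤ q)
    (f : (Fin (q + 1) → ℂ) → ℝ≥0∞) (hf : Measurable f) :
    ∫⁻ y : Fin (q + 1) → ℂ, f y
      = ∫⁻ v : Fin q → ℂ, ∫⁻ e : ℂ,
          f (e • (Fin.cons 1 v : Fin (q + 1) → ℂ)) * ENNReal.ofReal (‖e‖ ^ (2 * q)) := by
  -- measurability of the cons map
  have hcons : Measurable (fun p : ℂ × (Fin q → ℂ) => (Fin.cons p.1 p.2 : Fin (q + 1) → ℂ)) := by
    refine measurable_pi_iff.mpr fun i => ?_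
    refine Fin.cases ?_ (fun j => ?_) i
    · simpa using measurable_fst
    · simp only [Fin.cons_succ]; exact (measurable_pi_apply j).comp measurable_snd
  -- Step 1: split off the first coordinate
  have hsplit : ∫⁻ y : Fin (q + 1) → ℂ, f y
      = ∫⁻ e : ℂ, ∫⁻ w : Fin q → ℂ, f (Fin.cons e w) := by
    have hmp := (volume_preserving_piFinSuccAbove
      (fun _ : Fin (q + 1) => ℂ) 0).symm
    rw [← hmp.lintegral_comp hf]
    have : ∀ p : ℂ × (Fin q → ℂ),
        (MeasurableEquiv.piFinSuccAbove (fun _ : Fin (q + 1) => ℂ) 0).symm p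
          = Fin.cons p.1 p.2 := by
      intro p
      simp [MeasurableEquiv.piFinSuccAbove_symm_apply, Fin.insertNthEquiv,
        Fin.insertNth_zero']
    simp_rw [this]
    rw [Measure.volume_eq_prod]
    exact MeasureTheory.lintegral_prod _
      ((show Measurable fun p : ℂ × (Fin q → ℂ) => f (Fin.cons p.1 p.2) from
        hf.comp hcons).aemeasurable)
  rw [hsplit]
  -- Step 2: the a.e. pointwise rescaling in the inner integral
  have hae : ∀ᵐ e : ℂ, e ≠ 0 := by
    rw [ae_iff]
    simpa using measure_singleton (0 : ℂ)
  have hkey : ∀ e : ℂ, e ≠ 0 →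
      ∫⁻ w : Fin q → ℂ, f (Fin.cons e w)
        = ∫⁻ v : Fin q → ℂ,
            f (e • (Fin.cons 1 v : Fin (q + 1) → ℂ))
              * ENNReal.ofReal (‖e‖ ^ (2 * q)) := by
    intro e he
    have hg : Measurable (fun w : Fin q → ℂ => f (Fin.cons e w)) :=
      (hf.comp (hcons.comp measurable_prodMk_left))
    have := lintegral_smul_scale q e he _ hg
    rw [this]
    refine lintegral_congr fun v => ?_
    have h1 : (Fin.cons e (e • v) : Fin (q + 1) → ℂ)
        = e • (Fin.cons 1 v : Fin (q + 1) → ℂ) := by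
      funext i
      refine Fin.cases ?_ (fun j => ?_) i <;> simp
    have h2 : Complex.normSq e ^ q = ‖e‖ ^ (2 * q) := by
      rw [← Complex.sq_norm, ← pow_mul]
    rw [h1, h2]
  rw [lintegral_congr_ae (hae.mono fun e he => hkey e he)]
  -- Step 3: swap the order of integration
  have hsm : Measurable (fun p : ℂ × (Fin q → ℂ)
      => p.1 • (Fin.cons 1 p.2 : Fin (q + 1) → ℂ)) := by
    refine measurable_pi_iff.mpr fun i => ?_
    simp only [Pi.smul_apply, smul_eq_mul]
    refine Fin.cases ?_ (fun j => ?_) i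
    · simpa using (measurable_fst : Measurable fun p : ℂ × (Fin q → ℂ) => p.1)
    · simp only [Fin.cons_succ]; exact (measurable_fst.mul ((measurable_pi_apply j).comp measurable_snd) :
        Measurable fun p : ℂ × (Fin q → ℂ) => p.1 * p.2 j)
  have hFm : AEMeasurable (Function.uncurry fun (e : ℂ) (v : Fin q → ℂ) =>
      f (e • (Fin.cons 1 v : Fin (q + 1) → ℂ))
        * ENNReal.ofReal (‖e‖ ^ (2 * q)))
      (volume.prod volume) := by
    refine Measurable.aemeasurable ?_
    refine ((show Measurable fun p : ℂ × (Fin q → ℂ) =>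
        f (p.1 • (Fin.cons 1 p.2 : Fin (q + 1) → ℂ)) from hf.comp hsm)).mul ?_
    exact ENNReal.measurable_ofReal.comp
      ((continuous_norm.measurable.comp measurable_fst).pow_const _)
  exact lintegral_lintegral_swap hFm
end

section
/- Let p ≥ 2, let Σ be a positive definite Hermitian p×p complex matrix, and let h : ℝ → [0,∞) be measurable with ∫_{ℂ^p} h(‖x‖²) dx = 1 (Lebesgue measure on ℂ^p ≅ ℝ^{2p}). Let Y = (Y₁,…,Y_p) be a random vector in ℂ^p whose law has density y ↦ (det Σ)^{−1} h(y*Σ⁻¹y) with respect to Lebesgue measure (y*Σ⁻¹y is real since Σ is Hermitian). Then Y₁ ≠ 0 almost surely, and V = (Y₂/Y₁, …, Y_p/Y₁) ∈ ℂ^{p−1} has density v ↦ (Γ(p)/π^{p−1}) · (det Σ)^{−1} · ( u(v)* Σ⁻¹ u(v) )^{−p} with respect to Lebesgue measure on ℂ^{p−1}, where u(v) = (1, v₁, …, v_{p−1}) ∈ ℂ^p. In particular, the distribution of V does not depend on h. (This is the case K = 1, β = 2 of the paper's Corollary 1.) -/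
open MeasureTheory Matrix Real
open scoped ENNReal ComplexOrder

noncomputable section

namespace CentralAffineShape

/-- determinant (over ℝ) of multiplication by `c` on `ℂ`. -/
lemma det_mulLeft (c : ℂ) :
    LinearMap.det (LinearMap.mulLeft ℝ c) = Complex.normSq c := by
  rw [← LinearMap.det_toMatrix Complex.basisOneI, Matrix.det_fin_two]
  simp [LinearMap.toMatrix_apply, Complex.coe_basisOneI_repr, Complex.coe_basisOneI,
    Complex.normSq_apply]

lemma map_mul_left_volume {c : ℂ} (hc : c ≠ 0) :
    Measure.map (fun z => c * z) (volume : Measure ℂ)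
      = ENNReal.ofReal (Complex.normSq c)⁻¹ • volume := by
  have hpos : 0 < Complex.normSq c := Complex.normSq_pos.2 hc
  have hdet : LinearMap.det (LinearMap.mulLeft ℝ c) ≠ 0 := by
    rw [det_mulLeft]; exact hpos.ne'
  have h := Measure.map_linearMap_addHaar_eq_smul_addHaar (volume : Measure ℂ) hdet
  have hfun : ⇑(LinearMap.mulLeft ℝ c) = fun z : ℂ => c * z := by
    funext z; simp
  rw [hfun] at h
  rw [h, det_mulLeft, abs_of_nonneg (inv_nonneg.2 hpos.le)]

lemma map_mul_left_volume_unit {u : ℂ} (hu : Complex.normSq u = 1) :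
    Measure.map (fun z => u * z) (volume : Measure ℂ) = volume := by
  have hu0 : u ≠ 0 := by
    intro h; rw [h] at hu; simp at hu
  rw [map_mul_left_volume hu0, hu]; simp

variable {q : ℕ}

lemma measurable_smul_pi (u : ℂ) : Measurable (fun v : Fin q → ℂ => u • v) :=
  measurable_pi_lambda _ (fun i => by
    simpa only [Pi.smul_apply, smul_eq_mul] using (measurable_pi_apply i : Measurable fun x : Fin q → ℂ => x i).const_mul u)

lemma measurePreserving_unit_smul {u : ℂ} (hu : Complex.normSq u = 1) :
    MeasurePreserving (fun v : Fin q → ℂ => u • v) volume volume := by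
  have h : MeasurePreserving (fun (a : Fin q → ℂ) (i : Fin q) => u * a i) volume volume :=
    volume_preserving_pi (fun _ => ⟨measurable_id.const_mul u, map_mul_left_volume_unit hu⟩)
  exact h

lemma finrank_pi_complex : Module.finrank ℝ (Fin q → ℂ) = 2 * q := by
  simp [Module.finrank_pi_fintype, Complex.finrank_real_complex, Finset.sum_const, mul_comm]

/-- scaling of Lebesgue measure on `ℂ^q` under complex scalar multiplication. -/
lemma lintegral_smul_eq {w : ℂ} (hw : w ≠ 0) {f : (Fin q → ℂ) → ℝ≥0∞}
    (hf : Measurable f) :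
    ∫⁻ v, f v = ENNReal.ofReal (Complex.normSq w ^ q) * ∫⁻ v, f (w • v) := by
  set a := Complex.normSq w with ha
  have ha0 : 0 < a := Complex.normSq_pos.2 hw
  set r := Real.sqrt a with hr
  have hr0 : 0 < r := Real.sqrt_pos.2 ha0
  set u := (r : ℂ)⁻¹ * w with hu
  have hru : (r : ℂ) ≠ 0 := by simpa using hr0.ne'
  have hrr : r * r = a := Real.mul_self_sqrt ha0.le
  have hu1 : Complex.normSq u = 1 := by
    rw [hu, Complex.normSq_mul, Complex.normSq_inv, Complex.normSq_ofReal, ← ha, hrr]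
    exact inv_mul_cancel₀ ha0.ne'
  have hdecomp : ∀ v : Fin q → ℂ, w • v = u • ((r : ℝ) • v) := by
    intro v; funext i
    simp only [Pi.smul_apply, smul_eq_mul, Complex.real_smul, hu]
    field_simp
  have hsm : Measurable (fun v : Fin q → ℂ => (r : ℝ) • v) :=
    measurable_pi_lambda _ (fun i => (measurable_pi_apply i).const_smul r)
  have hmaps : Measure.map (fun v : Fin q → ℂ => (r : ℝ) • v) volume
      = ENNReal.ofReal ((a : ℝ) ^ q)⁻¹ • volume := by
    have h := Measure.map_addHaar_smul (volume : Measure (Fin q → ℂ)) hr0.ne'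
    rw [show (r • · : (Fin q → ℂ) → _) = (fun v : Fin q → ℂ => (r : ℝ) • v) from rfl] at h
    rw [h]
    congr 1
    rw [finrank_pi_complex, abs_of_nonneg (by positivity)]
    congr 1
    rw [pow_mul, Real.sq_sqrt ha0.le]
  have hfu : Measurable fun x : Fin q → ℂ => f (u • x) := hf.comp (measurable_smul_pi u)
  have step : ∫⁻ v, f (w • v) = ENNReal.ofReal ((a : ℝ) ^ q)⁻¹ * ∫⁻ v, f v := by
    calc ∫⁻ v, f (w • v) = ∫⁻ v, f (u • ((r : ℝ) • v)) := by
          simp_rw [hdecomp]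
      _ = ∫⁻ x, f (u • x) ∂(Measure.map (fun v : Fin q → ℂ => (r : ℝ) • v) volume) :=
          (lintegral_map hfu hsm).symm
      _ = ENNReal.ofReal ((a : ℝ) ^ q)⁻¹ * ∫⁻ x, f (u • x) := by
          rw [hmaps, lintegral_smul_measure, smul_eq_mul]
      _ = ENNReal.ofReal ((a : ℝ) ^ q)⁻¹ * ∫⁻ v, f v := by
          rw [(measurePreserving_unit_smul hu1).lintegral_comp hf]
  rw [step, ← mul_assoc, ← ENNReal.ofReal_mul (by positivity), mul_inv_cancel₀ (by positivity),
    ENNReal.ofReal_one, one_mul]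

/-- 1-dimensional scaling on ℂ. -/
lemma lintegral_scale_complex {G : ℝ → ℝ} (hG : Measurable G) {τ : ℝ} (hτ : 0 < τ) :
    ∫⁻ z : ℂ, ENNReal.ofReal (G (τ * Complex.normSq z))
      = ENNReal.ofReal τ⁻¹ * ∫⁻ z : ℂ, ENNReal.ofReal (G (Complex.normSq z)) := by
  set c : ℂ := ((Real.sqrt τ : ℝ) : ℂ) with hc
  have hcn : Complex.normSq c = τ := by
    rw [hc, Complex.normSq_ofReal, Real.mul_self_sqrt hτ.le]
  have hc0 : c ≠ 0 := by
    simp only [hc, ne_eq, Complex.ofReal_eq_zero]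
    exact (Real.sqrt_pos.2 hτ).ne'
  have hnsq : Measurable Complex.normSq := Complex.continuous_normSq.measurable
  have hmeas : Measurable fun x : ℂ => ENNReal.ofReal (G (Complex.normSq x)) :=
    ENNReal.measurable_ofReal.comp (hG.comp hnsq)
  have hmul : Measurable fun z : ℂ => c * z := measurable_id.const_mul c
  have hpt : ∀ z : ℂ, τ * Complex.normSq z = Complex.normSq (c * z) := fun z => by
    rw [Complex.normSq_mul, hcn]
  calc ∫⁻ z : ℂ, ENNReal.ofReal (G (τ * Complex.normSq z))
      = ∫⁻ z : ℂ, ENNReal.ofReal (G (Complex.normSq (c * z))) := by simp_rw [hpt]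
    _ = ∫⁻ x : ℂ, ENNReal.ofReal (G (Complex.normSq x))
          ∂(Measure.map (fun z : ℂ => c * z) volume) := (lintegral_map hmeas hmul).symm
    _ = ENNReal.ofReal τ⁻¹ * ∫⁻ z : ℂ, ENNReal.ofReal (G (Complex.normSq z)) := by
        rw [map_mul_left_volume hc0, hcn, lintegral_smul_measure, smul_eq_mul]

lemma measurable_smul_pi' (u : ℂ) : Measurable (fun v : Fin q → ℂ => u • v) :=
  measurable_pi_lambda _ (fun i => by
    simpa only [Pi.smul_apply, smul_eq_mul] using (measurable_pi_apply i : Measurable fun x : Fin q → ℂ => x i).const_mul u)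

lemma measurable_cons (w : ℂ) :
    Measurable (fun v : Fin q → ℂ => (Fin.cons w v : Fin (q + 1) → ℂ)) := by
  apply measurable_pi_lambda
  intro i
  refine Fin.cases ?_ ?_ i
  · simpa using measurable_const
  · intro j; simpa using measurable_pi_apply j

lemma measurable_cons2 :
    Measurable (fun p : ℂ × (Fin q → ℂ) => (Fin.cons p.1 (p.1 • p.2) : Fin (q + 1) → ℂ)) := by
  apply measurable_pi_lambda
  intro i
  refine Fin.cases ?_ ?_ i
  · simpa using measurable_fst
  · intro j
    simp only [Fin.cons_succ, Pi.smul_apply, smul_eq_mul]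
    exact measurable_fst.mul (measurable_snd.comp measurable_id |>.eval)

lemma piFinSuccAbove_symm_eq (w : ℂ) (v : Fin q → ℂ) :
    (MeasurableEquiv.piFinSuccAbove (fun _ : Fin (q + 1) => ℂ) 0).symm (w, v)
      = Fin.cons w v := by
  funext i
  simp [MeasurableEquiv.piFinSuccAbove, Fin.insertNthEquiv, Fin.insertNth_zero]

/-- Fubini for the cone parametrization `y = (w, w • v)`. -/
lemma fubini_cone (hq : 1 ≤ q) {F : (Fin (q + 1) → ℂ) → ℝ≥0∞} (hF : Measurable F) :
    ∫⁻ y, F y = ∫⁻ w : ℂ, ∫⁻ v : Fin q → ℂ,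
      ENNReal.ofReal (Complex.normSq w ^ q) * F (Fin.cons w (w • v)) := by
  set e := MeasurableEquiv.piFinSuccAbove (fun _ : Fin (q + 1) => ℂ) 0 with he
  have mp : MeasurePreserving e (Measure.pi fun _ => volume)
      ((volume : Measure ℂ).prod (Measure.pi fun _ => (volume : Measure ℂ))) :=
    measurePreserving_piFinSuccAbove (fun _ : Fin (q + 1) => (volume : Measure ℂ)) 0
  have mps := mp.symm e
  have hFe : Measurable fun p : ℂ × (Fin q → ℂ) => F (e.symm p) :=
    hF.comp e.symm.measurable
  have step1 : ∫⁻ y, F y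
      = ∫⁻ w : ℂ, ∫⁻ v : Fin q → ℂ, F (Fin.cons w v) := by
    calc ∫⁻ y, F y ∂volume
        = ∫⁻ y, F y ∂(Measure.pi fun _ => (volume : Measure ℂ)) := by rw [volume_pi]
      _ = ∫⁻ p, F (e.symm p)
            ∂((volume : Measure ℂ).prod (Measure.pi fun _ => (volume : Measure ℂ))) :=
          (mps.lintegral_comp hF).symm
      _ = ∫⁻ w : ℂ, ∫⁻ v : Fin q → ℂ, F (e.symm (w, v))
            ∂(Measure.pi fun _ => (volume : Measure ℂ)) ∂(volume : Measure ℂ) :=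
          lintegral_prod _ hFe.aemeasurable
      _ = ∫⁻ w : ℂ, ∫⁻ v : Fin q → ℂ, F (Fin.cons w v) := by
          rw [← volume_pi]
          simp_rw [he, piFinSuccAbove_symm_eq]
  have hinner : ∀ w : ℂ, w ≠ 0 →
      (∫⁻ v : Fin q → ℂ, F (Fin.cons w v))
        = ∫⁻ v : Fin q → ℂ, ENNReal.ofReal (Complex.normSq w ^ q) * F (Fin.cons w (w • v)) := by
    intro w hw
    have hm : Measurable fun v : Fin q → ℂ => F (Fin.cons w v) := hF.comp (measurable_cons w)
    rw [lintegral_smul_eq hw hm]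
    exact (lintegral_const_mul _ (hF.comp ((measurable_cons w).comp (measurable_smul_pi' w)))).symm
  have hae : ∀ᵐ w : ℂ, w ≠ 0 := by
    rw [ae_iff]
    simpa using measure_singleton (0 : ℂ)
  rw [step1]
  exact lintegral_congr_ae (hae.mono fun w hw => hinner w hw)

/-- The core change-of-variables identity. -/
lemma core (hq : 1 ≤ q) {g : ℝ → ℝ} (hg : Measurable g)
    {t : (Fin q → ℂ) → ℝ} (ht : Measurable t) (htpos : ∀ v, 0 < t v)
    {f : (Fin (q + 1) → ℂ) → ℝ≥0∞} (hf : Measurable f)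
    {B : Set (Fin q → ℂ)} (hB : MeasurableSet B)
    (hft : ∀ w : ℂ, w ≠ 0 → ∀ v, f (Fin.cons w (w • v))
      = ENNReal.ofReal (g (Complex.normSq w * t v)) * B.indicator 1 v) :
    ∫⁻ y, f y = (∫⁻ w : ℂ, ENNReal.ofReal (Complex.normSq w ^ q * g (Complex.normSq w)))
      * ∫⁻ v in B, ENNReal.ofReal ((t v ^ (q + 1))⁻¹) := by
  have hnsq : Measurable Complex.normSq := Complex.continuous_normSq.measurable
  set c := ∫⁻ w : ℂ, ENNReal.ofReal (Complex.normSq w ^ q * g (Complex.normSq w)) with hc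
  have hcm : Measurable fun w : ℂ => ENNReal.ofReal (Complex.normSq w ^ q * g (Complex.normSq w)) :=
    ENNReal.measurable_ofReal.comp ((hnsq.pow_const q).mul (hg.comp hnsq))
  set Φ : ℂ × (Fin q → ℂ) → ℝ≥0∞ := fun p =>
    ENNReal.ofReal (Complex.normSq p.1 ^ q * g (Complex.normSq p.1 * t p.2))
      * B.indicator 1 p.2 with hΦ
  have hΦm : Measurable Φ := by
    apply Measurable.mul
    · exact ENNReal.measurable_ofReal.comp
        (((hnsq.comp measurable_fst).pow_const q).mul
          (hg.comp ((hnsq.comp measurable_fst).mul (ht.comp measurable_snd))))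
    · exact (measurable_one.indicator hB).comp measurable_snd
  have stepA : ∫⁻ y, f y = ∫⁻ w : ℂ, ∫⁻ v, Φ (w, v) := by
    rw [fubini_cone hq hf]
    apply lintegral_congr_ae
    have hae : ∀ᵐ w : ℂ, w ≠ 0 := by rw [ae_iff]; simpa using measure_singleton (0 : ℂ)
    refine hae.mono fun w hw => ?_
    refine lintegral_congr fun v => ?_
    rw [hft w hw v, hΦ, ← mul_assoc, ← ENNReal.ofReal_mul (pow_nonneg (Complex.normSq_nonneg w) q)]
  have stepC : ∀ v : Fin q → ℂ, (∫⁻ w : ℂ, Φ (w, v))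
      = B.indicator (fun v' => ENNReal.ofReal ((t v' ^ (q + 1))⁻¹) * c) v := by
    intro v
    have hτ : 0 < t v := htpos v
    have key : ∫⁻ w : ℂ, ENNReal.ofReal (Complex.normSq w ^ q * g (Complex.normSq w * t v))
        = ENNReal.ofReal ((t v ^ (q + 1))⁻¹) * c := by
      set τ := t v with hτdef
      set G : ℝ → ℝ := fun s => (s / τ) ^ q * g s with hG
      have hGm : Measurable G := ((measurable_id.div_const τ).pow_const q).mul hg
      have h1 : ∀ w : ℂ, Complex.normSq w ^ q * g (Complex.normSq w * τ)
          = G (τ * Complex.normSq w) := by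
        intro w
        rw [hG]
        simp only
        rw [mul_div_cancel_left₀ _ hτ.ne', mul_comm τ]
      have h2 : ∀ s : ℝ, G s = (τ ^ q)⁻¹ * (s ^ q * g s) := by
        intro s
        rw [hG]
        simp only [div_pow]
        field_simp
      calc ∫⁻ w : ℂ, ENNReal.ofReal (Complex.normSq w ^ q * g (Complex.normSq w * τ))
          = ∫⁻ w : ℂ, ENNReal.ofReal (G (τ * Complex.normSq w)) := by simp_rw [h1]
        _ = ENNReal.ofReal τ⁻¹ * ∫⁻ z : ℂ, ENNReal.ofReal (G (Complex.normSq z)) :=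
            lintegral_scale_complex hGm hτ
        _ = ENNReal.ofReal τ⁻¹ * ∫⁻ z : ℂ, ENNReal.ofReal ((τ ^ q)⁻¹)
              * ENNReal.ofReal (Complex.normSq z ^ q * g (Complex.normSq z)) := by
            congr 1
            refine lintegral_congr fun z => ?_
            rw [h2, ENNReal.ofReal_mul (by positivity)]
        _ = ENNReal.ofReal τ⁻¹ * (ENNReal.ofReal ((τ ^ q)⁻¹) * c) := by
            rw [lintegral_const_mul _ hcm]
        _ = ENNReal.ofReal ((τ ^ (q + 1))⁻¹) * c := by
            rw [← mul_assoc, ← ENNReal.ofReal_mul (by positivity)]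
            congr 2
            rw [← mul_inv, ← pow_succ']
    by_cases hv : v ∈ B
    · simp only [Set.indicator_of_mem hv, hΦ, Pi.one_apply, mul_one]
      exact key
    · simp only [Set.indicator_of_notMem hv, hΦ, mul_zero]
      simp
  calc ∫⁻ y, f y = ∫⁻ w : ℂ, ∫⁻ v, Φ (w, v) := stepA
    _ = ∫⁻ v, ∫⁻ w : ℂ, Φ (w, v) := lintegral_lintegral_swap hΦm.aemeasurable
    _ = ∫⁻ v, B.indicator (fun v' => ENNReal.ofReal ((t v' ^ (q + 1))⁻¹) * c) v :=
        lintegral_congr stepC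
    _ = ∫⁻ v in B, ENNReal.ofReal ((t v ^ (q + 1))⁻¹) * c := by
        rw [lintegral_indicator hB]
    _ = (∫⁻ v in B, ENNReal.ofReal ((t v ^ (q + 1))⁻¹)) * c := by
        have hmeas' : Measurable fun v : Fin q → ℂ => ENNReal.ofReal ((t v ^ (q + 1))⁻¹) :=
          ENNReal.measurable_ofReal.comp ((ht.pow_const (q + 1)).inv)
        rw [lintegral_mul_const _ hmeas']
    _ = c * ∫⁻ v in B, ENNReal.ofReal ((t v ^ (q + 1))⁻¹) := mul_comm _ _

lemma integrable_exp_neg_normSq {b : ℝ} (hb : 0 < b) :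
    Integrable (fun z : ℂ => Real.exp (-(b * Complex.normSq z))) := by
  have h2 : Integrable (fun p : ℝ × ℝ => Real.exp (-(b * (p.1 ^ 2 + p.2 ^ 2)))) := by
    have h := Integrable.mul_prod (integrable_exp_neg_mul_sq hb) (integrable_exp_neg_mul_sq hb)
    rw [← Measure.volume_eq_prod] at h
    have hfun : (fun p : ℝ × ℝ => Real.exp (-(b * (p.1 ^ 2 + p.2 ^ 2))))
        = fun p : ℝ × ℝ => Real.exp (-b * p.1 ^ 2) * Real.exp (-b * p.2 ^ 2) := by
      funext p
      rw [← Real.exp_add]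
      congr 1
      ring
    rw [hfun]
    exact h
  have h4 : Integrable ((fun p : ℝ × ℝ => Real.exp (-(b * (p.1 ^ 2 + p.2 ^ 2))))
      ∘ Complex.measurableEquivRealProd) :=
    (MeasurePreserving.integrable_comp_emb Complex.volume_preserving_equiv_real_prod
      Complex.measurableEquivRealProd.measurableEmbedding).2 h2
  have hfun2 : (fun z : ℂ => Real.exp (-(b * Complex.normSq z)))
      = ((fun p : ℝ × ℝ => Real.exp (-(b * (p.1 ^ 2 + p.2 ^ 2))))
        ∘ Complex.measurableEquivRealProd) := by
    funext z
    simp [Function.comp, Complex.measurableEquivRealProd, Complex.normSq_apply, sq]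
  rw [hfun2]
  exact h4

lemma pow_mul_exp_bound {x : ℝ} (hx : 0 ≤ x) (k : ℕ) :
    x ^ k * Real.exp (-x) ≤ 2 ^ k * (k.factorial : ℝ) * Real.exp (-(2⁻¹ * x)) := by
  have h1 : (x / 2) ^ k / (k.factorial : ℝ) ≤ Real.exp (x / 2) := by
    have hsum := Real.sum_le_exp_of_nonneg (by positivity : (0:ℝ) ≤ x / 2) (k + 1)
    refine le_trans ?_ hsum
    refine Finset.single_le_sum (f := fun i => (x / 2) ^ i / (i.factorial : ℝ)) ?_ ?_
    · intro i _; positivity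
    · exact Finset.self_mem_range_succ k
  have hfac : (0:ℝ) < (k.factorial : ℝ) := by positivity
  have h2 : x ^ k ≤ 2 ^ k * (k.factorial : ℝ) * Real.exp (x / 2) := by
    have := (div_le_iff₀ hfac).1 h1
    calc x ^ k = 2 ^ k * (x / 2) ^ k := by
          rw [← mul_pow]; congr 1; ring
      _ ≤ 2 ^ k * (Real.exp (x / 2) * (k.factorial : ℝ)) := by
          apply mul_le_mul_of_nonneg_left this (by positivity)
      _ = 2 ^ k * (k.factorial : ℝ) * Real.exp (x / 2) := by ring
  calc x ^ k * Real.exp (-x) ≤ (2 ^ k * (k.factorial : ℝ) * Real.exp (x / 2)) * Real.exp (-x) := by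
        apply mul_le_mul_of_nonneg_right h2 (Real.exp_pos _).le
    _ = 2 ^ k * (k.factorial : ℝ) * Real.exp (-(2⁻¹ * x)) := by
        rw [mul_assoc, ← Real.exp_add]
        congr 2
        ring

lemma integrable_pow_mul_exp_neg_normSq (k : ℕ) :
    Integrable (fun z : ℂ => Complex.normSq z ^ k * Real.exp (-Complex.normSq z)) := by
  have hbd := integrable_exp_neg_normSq (b := 2⁻¹) (by norm_num)
  refine Integrable.mono' (hbd.const_mul (2 ^ k * (k.factorial : ℝ))) ?_ ?_
  · exact ((Complex.continuous_normSq.pow k).mul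
      ((Real.continuous_exp.comp Complex.continuous_normSq.neg))).aestronglyMeasurable
  · refine ae_of_all _ fun z => ?_
    have h0 : 0 ≤ Complex.normSq z := Complex.normSq_nonneg z
    rw [Real.norm_eq_abs, abs_of_nonneg (by positivity)]
    exact pow_mul_exp_bound h0 k

lemma integral_exp_neg_normSq : ∫ z : ℂ, Real.exp (-Complex.normSq z) = π := by
  have h := Complex.integral_exp_neg_rpow (p := 2) (by norm_num)
  have hpt : ∀ z : ℂ, ‖z‖ ^ (2:ℝ) = Complex.normSq z := by
    intro z
    rw [show (2:ℝ) = ((2:ℕ):ℝ) from by norm_num, Real.rpow_natCast,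
      Complex.sq_norm]
  simp_rw [hpt] at h
  rw [h]
  rw [show (2:ℝ)/2 + 1 = 2 from by norm_num, Real.Gamma_two, mul_one]

lemma integral_pow_mul_exp_neg_normSq (k : ℕ) :
    ∫ z : ℂ, Complex.normSq z ^ k * Real.exp (-Complex.normSq z)
      = π * Real.Gamma ((k : ℝ) + 1) := by
  have hq2 : (-2:ℝ) < 2 * (k:ℝ) := by
    have h0 : (0:ℝ) ≤ 2 * (k:ℝ) := by positivity
    linarith
  have h := Complex.integral_rpow_mul_exp_neg_rpow (p := 2) (q := 2 * (k:ℝ)) (by norm_num) hq2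
  have hpt : ∀ z : ℂ, ‖z‖ ^ (2 * (k:ℝ)) * Real.exp (-‖z‖ ^ (2:ℝ))
      = Complex.normSq z ^ k * Real.exp (-Complex.normSq z) := by
    intro z
    have h2 : ‖z‖ ^ (2:ℝ) = Complex.normSq z := by
      rw [show (2:ℝ) = ((2:ℕ):ℝ) from by norm_num, Real.rpow_natCast,
        Complex.sq_norm]
    have h1 : ‖z‖ ^ (2 * (k:ℝ)) = Complex.normSq z ^ k := by
      rw [show (2 * (k:ℝ)) = ((2:ℝ)) * (k:ℝ) from rfl, Real.rpow_mul (norm_nonneg z),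
        h2, Real.rpow_natCast]
    rw [h1, h2]
  simp_rw [hpt] at h
  rw [h]
  rw [show (2 * (k:ℝ) + 2) / 2 = (k:ℝ) + 1 from by ring]
  ring


lemma lintegral_exp_neg_normSq :
    ∫⁻ z : ℂ, ENNReal.ofReal (Real.exp (-Complex.normSq z)) = ENNReal.ofReal π := by
  have hint : Integrable (fun z : ℂ => Real.exp (-Complex.normSq z)) := by
    simpa using integrable_exp_neg_normSq one_pos
  rw [← ofReal_integral_eq_lintegral_ofReal hint (ae_of_all _ fun z => (Real.exp_pos _).le),
    integral_exp_neg_normSq]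

lemma lintegral_pow_mul_exp_neg_normSq (k : ℕ) :
    ∫⁻ z : ℂ, ENNReal.ofReal (Complex.normSq z ^ k * Real.exp (-Complex.normSq z))
      = ENNReal.ofReal (π * Real.Gamma ((k : ℝ) + 1)) := by
  rw [← ofReal_integral_eq_lintegral_ofReal (integrable_pow_mul_exp_neg_normSq k)
    (ae_of_all _ fun z => mul_nonneg (pow_nonneg (Complex.normSq_nonneg z) k)
      (Real.exp_pos _).le), integral_pow_mul_exp_neg_normSq]

set_option maxHeartbeats 1000000 in
lemma lintegral_pi_exp (n : ℕ) :
    ∫⁻ y : Fin n → ℂ, ENNReal.ofReal (Real.exp (-∑ i, Complex.normSq (y i)))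
      = ENNReal.ofReal π ^ n := by
  have hprod : ∀ y : Fin n → ℂ, Real.exp (-∑ i, Complex.normSq (y i))
      = ∏ i, Real.exp (-Complex.normSq (y i)) := by
    intro y
    rw [← Real.exp_sum]
    congr 1
    rw [← Finset.sum_neg_distrib]
  simp_rw [hprod]
  have hint : Integrable (fun y : Fin n → ℂ => ∏ i, Real.exp (-Complex.normSq (y i))) :=
    Integrable.fintype_prod (𝕜 := ℝ) (fun _ => by simpa using integrable_exp_neg_normSq one_pos)
  rw [← ofReal_integral_eq_lintegral_ofReal hint (ae_of_all _ fun y =>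
    Finset.prod_nonneg fun i _ => (Real.exp_pos _).le)]
  rw [volume_pi, integral_fintype_prod_eq_pow (fun z : ℂ => Real.exp (-Complex.normSq z)),
    integral_exp_neg_normSq, Fintype.card_fin, ENNReal.ofReal_pow pi_nonneg]

lemma cons_smul_eq {q : ℕ} (w : ℂ) (v : Fin q → ℂ) :
    (Fin.cons w (w • v) : Fin (q + 1) → ℂ) = w • (Fin.cons 1 v : Fin (q + 1) → ℂ) := by
  funext i
  refine Fin.cases ?_ ?_ i <;> simp

lemma quad_smul {n : ℕ} (A : Matrix (Fin n) (Fin n) ℂ) (w : ℂ) (x : Fin n → ℂ) :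
    star (w • x) ⬝ᵥ (A *ᵥ (w • x)) = ((Complex.normSq w : ℝ) : ℂ) * (star x ⬝ᵥ (A *ᵥ x)) := by
  rw [star_smul, Matrix.mulVec_smul, smul_dotProduct, dotProduct_smul,
    smul_eq_mul, smul_eq_mul, ← mul_assoc, Complex.normSq_eq_conj_mul_self]
  rfl

lemma measurable_quad {n : ℕ} (A : Matrix (Fin n) (Fin n) ℂ) :
    Measurable fun y : Fin n → ℂ => star y ⬝ᵥ (A *ᵥ y) := by
  simp only [dotProduct, mulVec, Pi.star_apply]
  apply Finset.measurable_sum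
  intro i _
  apply Measurable.mul
  · exact continuous_star.measurable.comp (measurable_pi_apply i)
  · apply Finset.measurable_sum
    intro j _
    exact (measurable_pi_apply j).const_mul _

end CentralAffineShape

section

open CentralAffineShape

/-- The case `K = 1`, `β = 2` of the central affine-shape density (Corollary 1):
if `Y` is complex elliptically distributed in `ℂ^p` (`p = q+1 ≥ 2`) with density
`(det Σ)^{-1} h(y* Σ⁻¹ y)`, then `Y₁ ≠ 0` a.s. and `V = (Y₂/Y₁, …, Y_p/Y₁)` has density
`(Γ(p)/π^{p-1}) (det Σ)^{-1} (u(v)* Σ⁻¹ u(v))^{-p}` with `u(v) = (1, v)`;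
in particular the law of `V` does not depend on the generator `h`. -/
theorem central_affine_shape_density_complex (q : ℕ) (hq : 1 ≤ q)
    (S : Matrix (Fin (q + 1)) (Fin (q + 1)) ℂ) (hS : S.PosDef)
    (h : ℝ → ℝ) (hmeas : Measurable h) (hnonneg : ∀ z, 0 ≤ h z)
    (hgen : ∫⁻ x : Fin (q + 1) → ℂ, ENNReal.ofReal (h (∑ i, ‖x i‖ ^ 2)) = 1)
    (Ω : Type*) [MeasureSpace Ω] [IsProbabilityMeasure (volume : Measure Ω)]
    (Y : Ω → Fin (q + 1) → ℂ) (hY : Measurable Y)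
    (hlaw : Measure.map Y volume
      = volume.withDensity fun y =>
          ENNReal.ofReal (S.det.re⁻¹ * h ((star y ⬝ᵥ (S⁻¹ *ᵥ y)).re))) :
    (∀ᵐ ω, Y ω 0 ≠ 0) ∧
      Measure.map (fun ω (i : Fin q) => Y ω i.succ / Y ω 0) volume
        = volume.withDensity fun v : Fin q → ℂ =>
            ENNReal.ofReal
              (Real.Gamma ((q : ℝ) + 1) / π ^ q * S.det.re⁻¹ *
                ((star (Fin.cons 1 v : Fin (q + 1) → ℂ) ⬝ᵥ
                    (S⁻¹ *ᵥ (Fin.cons 1 v : Fin (q + 1) → ℂ))).re) ^ (-((q : ℝ) + 1))) := by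
  have hnsqM : Measurable Complex.normSq := Complex.continuous_normSq.measurable
  -- Part 1 : `Y₁ ≠ 0` a.s.
  have hset0 : MeasurableSet {y : Fin (q + 1) → ℂ | y 0 = 0} :=
    measurableSet_eq_fun (measurable_pi_apply 0) measurable_const
  have hvol0 : (volume : Measure (Fin (q + 1) → ℂ)) {y | y 0 = 0} = 0 := by
    rw [volume_pi]
    exact Measure.pi_hyperplane _ 0 0
  have part1 : ∀ᵐ ω, Y ω 0 ≠ 0 := by
    have h2 : Measure.map Y volume {y | y 0 = 0} = 0 := by
      rw [hlaw]
      exact (withDensity_absolutelyContinuous volume _) hvol0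
    rw [Measure.map_apply hY hset0] at h2
    rw [ae_iff]
    simpa using h2
  refine ⟨part1, ?_⟩
  -- Part 2 : setup
  set d : ℝ := S.det.re⁻¹ with hd
  have hdetre : 0 < S.det.re := by
    have h0 : (0 : ℂ) < S.det := hS.det_pos
    rw [Complex.lt_def] at h0
    simpa using h0.1
  have hdnn : 0 ≤ d := by rw [hd]; positivity
  have hA : (S⁻¹).PosDef := hS.inv
  -- the quadratic form
  set t : (Fin q → ℂ) → ℝ :=
    fun v => (star (Fin.cons 1 v : Fin (q + 1) → ℂ) ⬝ᵥ
      (S⁻¹ *ᵥ (Fin.cons 1 v : Fin (q + 1) → ℂ))).re with htdef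
  have htpos : ∀ v, 0 < t v := by
    intro v
    have hu0 : (Fin.cons 1 v : Fin (q + 1) → ℂ) ≠ 0 := by
      intro hcontra
      have := congrFun hcontra 0
      simp at this
    have := hA.re_dotProduct_pos hu0
    simpa [htdef, RCLike.re_to_complex] using this
  have ht : Measurable t := by
    rw [htdef]
    exact Complex.measurable_re.comp ((measurable_quad S⁻¹).comp (measurable_cons 1))
  have hquad : ∀ (w : ℂ) (v : Fin q → ℂ),
      ((star (Fin.cons w (w • v) : Fin (q + 1) → ℂ) ⬝ᵥ
        (S⁻¹ *ᵥ (Fin.cons w (w • v) : Fin (q + 1) → ℂ)))).re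
      = Complex.normSq w * t v := by
    intro w v
    rw [cons_smul_eq, quad_smul, htdef]
    simp [Complex.mul_re]
  -- the generator constant
  set c_h := ∫⁻ w : ℂ, ENNReal.ofReal (Complex.normSq w ^ q * h (Complex.normSq w)) with hch
  -- auxiliary quadratic form for Σ = 1
  set t₁ : (Fin q → ℂ) → ℝ := fun v => 1 + ∑ i, Complex.normSq (v i) with ht₁def
  have ht₁ : Measurable t₁ :=
    measurable_const.add (Finset.measurable_sum _ fun i _ => hnsqM.comp (measurable_pi_apply i))
  have ht₁pos : ∀ v, 0 < t₁ v := by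
    intro v
    have : 0 ≤ ∑ i, Complex.normSq (v i) :=
      Finset.sum_nonneg fun i _ => Complex.normSq_nonneg _
    rw [ht₁def]
    simp only
    linarith
  have hsum : ∀ (w : ℂ) (v : Fin q → ℂ),
      (∑ i, Complex.normSq ((Fin.cons w (w • v) : Fin (q + 1) → ℂ) i))
        = Complex.normSq w * t₁ v := by
    intro w v
    rw [Fin.sum_univ_succ]
    simp only [Fin.cons_zero, Fin.cons_succ, Pi.smul_apply, smul_eq_mul, Complex.normSq_mul,
      ht₁def]
    rw [mul_add, mul_one, Finset.mul_sum]
  set I₁ := ∫⁻ v : Fin q → ℂ, ENNReal.ofReal ((t₁ v ^ (q + 1))⁻¹) with hI₁def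
  -- application of `core` with the actual generator and Σ = 1
  have happ2 : 1 = c_h * I₁ := by
    have hf₂ : Measurable fun y : Fin (q + 1) → ℂ =>
        ENNReal.ofReal (h (∑ i, ‖y i‖ ^ 2)) := by
      apply ENNReal.measurable_ofReal.comp
      apply hmeas.comp
      exact Finset.measurable_sum _ fun i _ =>
        ((continuous_norm.measurable).comp (measurable_pi_apply i)).pow_const 2
    have hcore := core hq hmeas ht₁ ht₁pos hf₂ MeasurableSet.univ ?_
    · rw [hgen] at hcore
      rw [hcore, Measure.restrict_univ, hch, hI₁def]
    · intro w hw v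
      have habs : (∑ i, ‖(Fin.cons w (w • v) : Fin (q + 1) → ℂ) i‖ ^ 2)
          = Complex.normSq w * t₁ v := by
        rw [← hsum w v]
        congr 1
        funext i
        rw [Complex.sq_norm]
      rw [habs]
      simp
  -- application of `core` with the Gaussian generator and Σ = 1
  have happ3 : ENNReal.ofReal π ^ (q + 1)
      = ENNReal.ofReal (π * Real.Gamma ((q : ℝ) + 1)) * I₁ := by
    have hgm : Measurable fun s : ℝ => Real.exp (-s) :=
      Real.continuous_exp.measurable.comp measurable_neg
    have hf₃ : Measurable fun y : Fin (q + 1) → ℂ =>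
        ENNReal.ofReal (Real.exp (-∑ i, Complex.normSq (y i))) := by
      apply ENNReal.measurable_ofReal.comp
      apply Real.continuous_exp.measurable.comp
      apply Measurable.neg
      exact Finset.measurable_sum _ fun i _ => hnsqM.comp (measurable_pi_apply i)
    have hcore := core hq hgm ht₁ ht₁pos hf₃ MeasurableSet.univ ?_
    · rw [lintegral_pi_exp (q + 1)] at hcore
      rw [hcore, Measure.restrict_univ, ← hI₁def, lintegral_pow_mul_exp_neg_normSq q]
    · intro w hw v
      rw [hsum w v]
      simp
  -- evaluating the universal integral I₁ and then c_h
  set Γp := Real.Gamma ((q : ℝ) + 1) with hΓp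
  have hΓpos : 0 < Γp := Real.Gamma_pos_of_pos (by positivity)
  have hI₁ : I₁ = ENNReal.ofReal (π ^ q / Γp) := by
    have h0 : ENNReal.ofReal (π * Γp) ≠ 0 :=
      (ENNReal.ofReal_pos.2 (by positivity)).ne'
    have hT : ENNReal.ofReal (π * Γp) ≠ ⊤ := ENNReal.ofReal_ne_top
    apply (ENNReal.mul_left_strictMono h0 hT).injective
    show I₁ * ENNReal.ofReal (π * Γp) = ENNReal.ofReal (π ^ q / Γp) * ENNReal.ofReal (π * Γp)
    rw [mul_comm I₁, mul_comm (ENNReal.ofReal (π ^ q / Γp))]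
    rw [← happ3, ← ENNReal.ofReal_mul (by positivity), ← ENNReal.ofReal_pow pi_nonneg]
    congr 1
    field_simp
    ring
  have hI₁0 : I₁ ≠ 0 := by
    rw [hI₁]
    exact (ENNReal.ofReal_pos.2 (by positivity)).ne'
  have hI₁T : I₁ ≠ ⊤ := by rw [hI₁]; exact ENNReal.ofReal_ne_top
  have hch_val : c_h = ENNReal.ofReal (Γp / π ^ q) := by
    have : c_h = I₁⁻¹ := by
      calc c_h = c_h * (I₁ * I₁⁻¹) := by rw [ENNReal.mul_inv_cancel hI₁0 hI₁T, mul_one]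
        _ = (c_h * I₁) * I₁⁻¹ := by rw [mul_assoc]
        _ = 1 * I₁⁻¹ := by rw [← happ2]
        _ = I₁⁻¹ := one_mul _
    rw [this, hI₁, ← ENNReal.ofReal_inv_of_pos (by positivity), inv_div]
  -- the affine shape map
  set φ : (Fin (q + 1) → ℂ) → (Fin q → ℂ) := fun y i => y i.succ / y 0 with hφdef
  have hφ : Measurable φ :=
    measurable_pi_lambda _ fun i => (measurable_pi_apply i.succ).div (measurable_pi_apply 0)
  -- the density of Y
  set gY : (Fin (q + 1) → ℂ) → ℝ≥0∞ :=
    fun y => ENNReal.ofReal (d * h ((star y ⬝ᵥ (S⁻¹ *ᵥ y)).re)) with hgYdef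
  have hgY : Measurable gY := by
    apply ENNReal.measurable_ofReal.comp
    exact (hmeas.comp (Complex.measurable_re.comp (measurable_quad S⁻¹))).const_mul d
  have hmapY : Measure.map (fun ω (i : Fin q) => Y ω i.succ / Y ω 0) volume
      = Measure.map φ (volume.withDensity gY) := by
    rw [← hlaw, Measure.map_map hφ hY]
    rfl
  rw [hmapY]
  -- conclude by computing both measures on an arbitrary measurable set
  refine Measure.ext fun A hA => ?_
  have hker : Measurable fun v : Fin q → ℂ => ENNReal.ofReal ((t v ^ (q + 1))⁻¹) :=
    ENNReal.measurable_ofReal.comp ((ht.pow_const (q + 1)).inv)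
  have hLHS : Measure.map φ (volume.withDensity gY) A
      = (ENNReal.ofReal d * ENNReal.ofReal (Γp / π ^ q))
          * ∫⁻ v in A, ENNReal.ofReal ((t v ^ (q + 1))⁻¹) := by
    rw [Measure.map_apply hφ hA, withDensity_apply _ (hφ hA),
      ← lintegral_indicator (hφ hA)]
    have hind : (φ ⁻¹' A).indicator gY = fun y => gY y * A.indicator 1 (φ y) := by
      funext y
      by_cases hy : φ y ∈ A
      · rw [Set.indicator_of_mem hy, Set.indicator_of_mem (by exact hy), Pi.one_apply, mul_one]
      · rw [Set.indicator_of_notMem hy, Set.indicator_of_notMem (by exact hy), mul_zero]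
    rw [hind]
    have hFm : Measurable fun y => gY y * A.indicator 1 (φ y) :=
      hgY.mul ((measurable_one.indicator hA).comp hφ)
    have hcore := core hq ((hmeas.const_mul d)) ht htpos hFm hA ?_
    · rw [hcore]
      congr 1
      have hpt : ∀ w : ℂ, Complex.normSq w ^ q * (d * h (Complex.normSq w))
          = d * (Complex.normSq w ^ q * h (Complex.normSq w)) := fun w => by ring
      calc ∫⁻ w : ℂ, ENNReal.ofReal (Complex.normSq w ^ q * (d * h (Complex.normSq w)))
          = ∫⁻ w : ℂ, ENNReal.ofReal d
              * ENNReal.ofReal (Complex.normSq w ^ q * h (Complex.normSq w)) := by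
            refine lintegral_congr fun w => ?_
            rw [hpt w, ENNReal.ofReal_mul hdnn]
        _ = ENNReal.ofReal d * c_h := by
            have hchm : Measurable fun w : ℂ =>
                ENNReal.ofReal (Complex.normSq w ^ q * h (Complex.normSq w)) :=
              ENNReal.measurable_ofReal.comp ((hnsqM.pow_const q).mul (hmeas.comp hnsqM))
            rw [lintegral_const_mul _ hchm, hch]
        _ = ENNReal.ofReal d * ENNReal.ofReal (Γp / π ^ q) := by rw [hch_val]
    · intro w hw v
      have hφv : φ (Fin.cons w (w • v)) = v := by
        funext i
        rw [hφdef]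
        simp only [Fin.cons_succ, Fin.cons_zero, Pi.smul_apply, smul_eq_mul]
        exact mul_div_cancel_left₀ _ hw
      rw [hgYdef]
      simp only
      rw [hquad w v, hφv]
  rw [hLHS, withDensity_apply _ hA]
  have hptw : ∀ v : Fin q → ℂ,
      ENNReal.ofReal (Γp / π ^ q * d * t v ^ (-((q : ℝ) + 1)))
        = (ENNReal.ofReal d * ENNReal.ofReal (Γp / π ^ q))
            * ENNReal.ofReal ((t v ^ (q + 1))⁻¹) := by
    intro v
    have hrpow : t v ^ (-((q : ℝ) + 1)) = (t v ^ (q + 1))⁻¹ := by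
      rw [← Real.rpow_natCast (t v) (q + 1), ← Real.rpow_neg (htpos v).le]
      norm_num
    rw [hrpow, ENNReal.ofReal_mul (by positivity), ENNReal.ofReal_mul (by positivity)]
    ring
  calc (ENNReal.ofReal d * ENNReal.ofReal (Γp / π ^ q))
        * ∫⁻ v in A, ENNReal.ofReal ((t v ^ (q + 1))⁻¹)
      = ∫⁻ v in A, (ENNReal.ofReal d * ENNReal.ofReal (Γp / π ^ q))
          * ENNReal.ofReal ((t v ^ (q + 1))⁻¹) := (lintegral_const_mul _ hker).symm
    _ = ∫⁻ v in A, ENNReal.ofReal (Γp / π ^ q * d * t v ^ (-((q : ℝ) + 1))) := by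
        refine lintegral_congr fun v => (hptw v).symm
    _ = ∫⁻ v in A, ENNReal.ofReal
          (Real.Gamma ((q : ℝ) + 1) / π ^ q * S.det.re⁻¹ *
            ((star (Fin.cons 1 v : Fin (q + 1) → ℂ) ⬝ᵥ
              (S⁻¹ *ᵥ (Fin.cons 1 v : Fin (q + 1) → ℂ))).re) ^ (-((q : ℝ) + 1))) := by
        rfl

end
end
end
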